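/- arXiv:2002.00546 — 3 statements merged into one kernel-verified Lean document; each statement's English description precedes it below -/
import Mathlib

section
/- Let (a_p) be a sequence of real numbers indexed by primes satisfying |a_p| ≤ 2, and set b_p = a_p² - 1 and c_p = a_p⁴ - 3a_p² + 1. Then for every prime p, |a_p| ≤ 11/10 - (57/1000)·c_p + (399/1000)·b_p, and consequently for any finite set S of primes, ∑_{p ∈ S} |a_p| ≤ ∑_{p ∈ S} (11/10 - (57/1000)·c_p + (399/1000)·b_p). -/
theorem stmt_4 (a b c : ℕ → ℝ)
    (ha : ∀ p : ℕ, p.Prime → |a p| ≤ 2)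
    (hb : ∀ p : ℕ, p.Prime → b p = (a p)^2 - 1)
    (hc : ∀ p : ℕ, p.Prime → c p = (a p)^4 - 3*(a p)^2 + 1) :
    (∀ p : ℕ, p.Prime → |a p| ≤ 11/10 - (57/1000) * c p + (399/1000) * b p) ∧
    ∀ S : Finset ℕ, (∀ p ∈ S, p.Prime) →
      ∑ p ∈ S, |a p| ≤ ∑ p ∈ S, (11/10 - (57/1000) * c p + (399/1000) * b p) := by
  have key : ∀ p : ℕ, p.Prime → |a p| ≤ 11/10 - (57/1000) * c p + (399/1000) * b p := by
    intro p hp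
    rw [hb p hp, hc p hp]
    have h2 := ha p hp
    have h0 : 0 ≤ |a p| := abs_nonneg _
    have hsq : |a p| ^ 2 = (a p) ^ 2 := sq_abs _
    set t : ℝ := |a p| with ht
    nlinarith [sq_nonneg (t - 2), sq_nonneg (t ^ 2 - 2), sq_nonneg (t - 1), sq_nonneg ((t - 2) * (t - 1)), sq_nonneg (t * (t - 2)), mul_nonneg h0 (sq_nonneg (t - 2)), mul_nonneg (mul_nonneg h0 h0) (sq_nonneg (t - 2))]
  exact ⟨key, fun S hS => Finset.sum_le_sum fun p hp => key p (hS p hp)⟩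
end

section
/- Let p ≥ 2 be a prime and let λf, λg be real numbers with |λg| ≤ 19/20 and |λf| ≤ 2. Suppose λF = λf + λg and λF2 = λf² + λg² + λf·λg - 2 - 1/p, and assume λF2 ≥ 0. Then λF² ≥ 2 + 1/p + λf·λg > 1/10, and in particular |λF| > 10^(-1/2). -/
theorem stmt_7 (p : ℕ) (hp : p.Prime) (lf lg lF lF2 : ℝ)
    (hg : |lg| ≤ 19/20) (hf : |lf| ≤ 2)
    (h1 : lF = lf + lg)
    (h2 : lF2 = lf^2 + lg^2 + lf * lg - 2 - 1/(p:ℝ))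
    (hpos : 0 ≤ lF2) :
    lF^2 ≥ 2 + 1/(p:ℝ) + lf * lg ∧ 2 + 1/(p:ℝ) + lf * lg > 1/10 ∧
      |lF| > 1 / Real.sqrt 10 := by
  have hpp : (0:ℝ) < (p:ℝ) := by exact_mod_cast hp.pos
  have hinv : 0 < 1/(p:ℝ) := by positivity
  have hprod : |lf * lg| ≤ 19/10 := by
    rw [abs_mul]
    calc |lf| * |lg| ≤ 2 * (19/20) := by
          apply mul_le_mul hf hg (abs_nonneg _) (by norm_num)
      _ = 19/10 := by norm_num
  have hlb : -(19/10) ≤ lf * lg := (abs_le.mp hprod).1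
  have h10 : 2 + 1/(p:ℝ) + lf * lg > 1/10 := by linarith
  have hexp : lF^2 = lf^2 + 2*(lf*lg) + lg^2 := by rw [h1]; ring
  have hsq : lF^2 ≥ 2 + 1/(p:ℝ) + lf * lg := by linarith
  refine ⟨hsq, h10, ?_⟩
  have hs : Real.sqrt 10 > 0 := Real.sqrt_pos.mpr (by norm_num)
  rw [gt_iff_lt, div_lt_iff₀ hs, ← Real.sqrt_sq (abs_nonneg lF)]
  have : (1:ℝ) = Real.sqrt 1 := (Real.sqrt_one).symm
  calc (1:ℝ) = Real.sqrt 1 := this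
    _ < Real.sqrt (lF^2) * Real.sqrt 10 := by
        rw [← Real.sqrt_mul (by positivity)]
        apply Real.sqrt_lt_sqrt (by norm_num)
        have : lF^2 > 1/10 := lt_of_lt_of_le h10 hsq
        nlinarith
    _ = Real.sqrt (|lF|^2) * Real.sqrt 10 := by rw [sq_abs]
end

section
/- Let p ≥ 2 be a prime and λf, λg real numbers with |λg| ≤ 13/10 and |λf| ≤ 2, and suppose λF = λf + λg, λF2 = λf² + λg² + λf·λg - 2 - 1/p, λF ≥ 0, and λF2 ≥ 0. Then λF ≥ 1/10. -/
theorem stmt_8 (p : ℕ) (hp : p.Prime) (lf lg lF lF2 : ℝ)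
    (hg : |lg| ≤ 13/10) (hf : |lf| ≤ 2)
    (h1 : lF = lf + lg)
    (h2 : lF2 = lf^2 + lg^2 + lf * lg - 2 - 1/(p:ℝ))
    (hFpos : 0 ≤ lF) (hpos : 0 ≤ lF2) :
    lF ≥ 1/10 := by
  have hg' := abs_le.mp hg
  have hf' := abs_le.mp hf
  have hp0 : (0:ℝ) ≤ 1/(p:ℝ) := by positivity
  rcases le_or_gt (14/10) lf with h | h
  · linarith [hg'.1]
  · rcases le_or_gt lf (-(14/10)) with h' | h'
    · linarith [hg'.2]
    · nlinarith [sq_nonneg lF, sq_nonneg (lf+lg), mul_nonneg hFpos hFpos,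
        mul_nonneg (le_of_lt (by linarith : (0:ℝ) < 14/10 - lf)) (by linarith : (0:ℝ) ≤ 13/10 - lg),
        mul_nonneg (le_of_lt (by linarith : (0:ℝ) < lf + 14/10)) (by linarith : (0:ℝ) ≤ lg + 13/10)]
end
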